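/- Let $d\geq 1$, $A\in\mathbb{C}$, $\omega=e^{2\pi i/d}$, $K\neq 0$. The $[d/2]$ functions among $G_k(z)=K\sqrt{2\pi/d}\,z^{(2A+1-d)/(2d)}\omega^{k(A-1/2)}\exp\left[\frac{d}{d+1}z^{(d+1)/d}\omega^k\right]$, $k=0,\dots,d-1$, for which $\Re(z^{(d+1)/d}\omega^k)>0$ as $z\to\infty$ in the sector $\arg z\in(-\frac{\pi}{2(d+1)},0)$, are linearly independent, and no nontrivial linear combination of them is of exponential type in that sector (i.e., bounded by $|z|^Ce^{C|z|}$ for some constant $C$). -/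

import Mathlib

open Real Complex Filter

lemma aux_theta (d : ℕ) (hd : 1 ≤ d) :
    ∃ θ : ℝ, -(π / (2 * ((d:ℝ) + 1))) < θ ∧ θ < 0 ∧
      ∀ k k' : ℕ, k < d → k' < d → k ≠ k' →
        Real.cos (((d:ℝ)+1)/d * θ + 2*π*k/d) ≠ Real.cos (((d:ℝ)+1)/d * θ + 2*π*k'/d) := by
  have hd0 : (0:ℝ) < d := by exact_mod_cast hd
  have hd1 : (0:ℝ) < (d:ℝ) + 1 := by linarith
  have hπ := Real.pi_pos
  have hab : -(π / (2 * ((d:ℝ) + 1))) < 0 := neg_neg_iff_pos.mpr (by positivity)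
  set Q : Set ℝ := Set.range (fun p : ℤ × ℤ => π * (p.1 * d - p.2) / ((d:ℝ)+1)) with hQ
  have hQc : Q.Countable := Set.countable_range _
  have : ∃ θ ∈ Set.Ioo (-(π / (2 * ((d:ℝ) + 1)))) 0, θ ∉ Q := by
    by_contra h
    push_neg at h
    have hsub : Set.Ioo (-(π / (2 * ((d:ℝ) + 1)))) 0 ⊆ Q := fun x hx => h x hx
    have hQ0 : MeasureTheory.volume Q = 0 := hQc.measure_zero _
    have h1 : MeasureTheory.volume (Set.Ioo (-(π / (2 * ((d:ℝ) + 1)))) 0) ≤ 0 :=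
      hQ0 ▸ MeasureTheory.measure_mono hsub
    rw [Real.volume_Ioo, le_zero_iff] at h1
    simp only [ENNReal.ofReal_eq_zero, sub_nonpos] at h1
    linarith
  obtain ⟨θ, ⟨hθ1, hθ2⟩, hθQ⟩ := this
  refine ⟨θ, hθ1, hθ2, ?_⟩
  intro k k' hk hk' hkk heq
  have h0 : Real.cos (((d:ℝ)+1)/d * θ + 2*π*k/d) - Real.cos (((d:ℝ)+1)/d * θ + 2*π*k'/d) = 0 := by
    linarith
  rw [Real.cos_sub_cos] at h0
  rcases mul_eq_zero.1 h0 with h1 | h2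
  · rcases mul_eq_zero.1 h1 with h3 | h4
    · norm_num at h3
    · rw [Real.sin_eq_zero_iff] at h4
      obtain ⟨n, hn⟩ := h4
      refine hθQ ⟨(n, (k:ℤ) + k'), ?_⟩
      show π * ((n:ℝ) * d - ((k:ℤ) + (k':ℤ) : ℤ)) / ((d:ℝ)+1) = θ
      push_cast
      field_simp at hn ⊢
      nlinarith [hn]
  · rw [Real.sin_eq_zero_iff] at h2
    obtain ⟨n, hn⟩ := h2
    field_simp at hn
    have hn' : (n:ℝ) * d = (k:ℝ) - k' := by
      have h2π : (2*π:ℝ) ≠ 0 := by positivity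
      apply mul_left_cancel₀ h2π
      ring_nf
      ring_nf at hn
      linarith
    have hne : n ≠ 0 := by
      rintro rfl
      simp at hn'
      exact hkk (by exact_mod_cast (by linarith : (k:ℝ) = k'))
    have h1n : (1:ℝ) ≤ |(n:ℝ)| := by
      have := Int.one_le_abs hne
      calc (1:ℝ) = ((1:ℤ):ℝ) := by norm_num
        _ ≤ ((|n|:ℤ):ℝ) := by exact_mod_cast this
        _ = |(n:ℝ)| := by push_cast; ring
    have habs : |(n:ℝ)| * d = |(k:ℝ) - k'| := by
      rw [← hn', abs_mul, abs_of_pos hd0]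
    have hlt : |(k:ℝ) - k'| < d := by
      rw [abs_sub_lt_iff]
      have h1 : (k:ℝ) < d := by exact_mod_cast hk
      have h2 : (k':ℝ) < d := by exact_mod_cast hk'
      have h3 : (0:ℝ) ≤ k := Nat.cast_nonneg k
      have h4 : (0:ℝ) ≤ k' := Nat.cast_nonneg k'
      constructor <;> linarith
    nlinarith

lemma aux_growth (e' m m' cM a B c1 c2 q : ℝ) (he : 1 < e') (hm : 0 < m) (hm' : m' < m)
    (hcM : 0 < cM) (ha : 0 < a) (hB : 0 ≤ B) :
    ∃ r : ℝ, 1 ≤ r ∧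
      r ^ c1 * Real.exp (c2 * r) <
        cM * r ^ q * (a * Real.exp (m * r ^ e') - B * Real.exp (m' * r ^ e')) := by
  have hδ : 0 < m - m' := by linarith
  -- eventually facts
  have hre : Tendsto (fun r : ℝ => r ^ e') atTop atTop := tendsto_rpow_atTop (by linarith)
  have h0 : Tendsto (fun r : ℝ => B * Real.exp (-((m - m') * r ^ e'))) atTop (nhds 0) := by
    have h1 : Tendsto (fun r : ℝ => (m - m') * r ^ e') atTop atTop := hre.const_mul_atTop hδ
    have h2 := Real.tendsto_exp_neg_atTop_nhds_zero.comp h1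
    have := h2.const_mul B
    simpa using this
  have ev1 : ∀ᶠ r : ℝ in atTop, B * Real.exp (-((m - m') * r ^ e')) < a / 2 :=
    h0.eventually (gt_mem_nhds (by linarith))
  have ev2 : ∀ᶠ r : ℝ in atTop, (1:ℝ) ≤ r := eventually_ge_atTop 1
  have ev3 : ∀ᶠ r : ℝ in atTop, r + c2 * r ≤ m * r ^ e' := by
    have h1 : Tendsto (fun r : ℝ => r ^ (e' - 1)) atTop atTop := tendsto_rpow_atTop (by linarith)
    have h2 : ∀ᶠ r : ℝ in atTop, c2 + 1 ≤ m * r ^ (e' - 1) := by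
      have := (h1.const_mul_atTop hm).eventually_ge_atTop (c2 + 1)
      exact this
    filter_upwards [h2, eventually_ge_atTop (1:ℝ)] with r h2 hr1
    have hr0 : 0 < r := by linarith
    have hsplit := Real.rpow_add hr0 (e' - 1) 1
    rw [show e' - 1 + 1 = e' by ring, Real.rpow_one] at hsplit
    rw [hsplit]
    have := mul_le_mul_of_nonneg_right h2 (le_of_lt hr0)
    calc r + c2 * r = (c2 + 1) * r := by ring
      _ ≤ m * r ^ (e' - 1) * r := this
      _ = m * (r ^ (e' - 1) * r) := by ring
  have ev4 : ∀ᶠ r : ℝ in atTop, r ^ (c1 - q) < cM * (a / 2) * Real.exp r := by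
    have h1 := tendsto_exp_div_rpow_atTop (c1 - q)
    have h2 := h1.const_mul_atTop (by positivity : 0 < cM * (a/2))
    have h3 := h2.eventually_gt_atTop 1
    filter_upwards [h3, eventually_ge_atTop (1:ℝ)] with r h3 hr1
    have hr0 : (0:ℝ) < r := by linarith
    have hrp : (0:ℝ) < r ^ (c1 - q) := Real.rpow_pos_of_pos hr0 _
    have h3' : 1 < (cM * (a/2) * Real.exp r) / r ^ (c1 - q) := by
      rw [mul_div_assoc]; exact h3
    exact (one_lt_div hrp).1 h3'
  obtain ⟨r, h1, h2, h3, h4⟩ := (ev1.and (ev2.and (ev3.and ev4))).exists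
  refine ⟨r, h2, ?_⟩
  have hr0 : (0:ℝ) < r := by linarith
  -- key pieces
  have key1 : a / 2 < a - B * Real.exp (-((m - m') * r ^ e')) := by linarith
  have hexp : B * Real.exp (m' * r ^ e') =
      B * Real.exp (-((m - m') * r ^ e')) * Real.exp (m * r ^ e') := by
    rw [mul_assoc, ← Real.exp_add]; ring_nf
  have hEpos : (0:ℝ) < Real.exp (m * r ^ e') := Real.exp_pos _
  have hrq : (0:ℝ) < r ^ q := Real.rpow_pos_of_pos hr0 _
  -- chain
  have step1 : r ^ c1 * Real.exp (c2 * r) < cM * (a/2) * Real.exp r * r ^ q * Real.exp (c2 * r) := by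
    have h5 : r ^ c1 = r ^ (c1 - q) * r ^ q := by
      rw [← Real.rpow_add hr0, show c1 - q + q = c1 by ring]
    rw [h5]
    have := mul_lt_mul_of_pos_right h4 hrq
    exact mul_lt_mul_of_pos_right this (Real.exp_pos _)
  have step2 : cM * (a/2) * Real.exp r * r ^ q * Real.exp (c2 * r) ≤
      cM * (a/2) * r ^ q * Real.exp (m * r ^ e') := by
    have h6 : Real.exp r * Real.exp (c2 * r) = Real.exp (r + c2 * r) := by
      rw [← Real.exp_add]
    have h7 : Real.exp (r + c2 * r) ≤ Real.exp (m * r ^ e') := Real.exp_le_exp.2 h3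
    calc cM * (a/2) * Real.exp r * r ^ q * Real.exp (c2 * r)
        = cM * (a/2) * r ^ q * (Real.exp r * Real.exp (c2 * r)) := by ring
      _ = cM * (a/2) * r ^ q * Real.exp (r + c2 * r) := by rw [h6]
      _ ≤ cM * (a/2) * r ^ q * Real.exp (m * r ^ e') := by
          apply mul_le_mul_of_nonneg_left h7; positivity
  have step3 : cM * (a/2) * r ^ q * Real.exp (m * r ^ e') <
      cM * r ^ q * (a * Real.exp (m * r ^ e') - B * Real.exp (m' * r ^ e')) := by
    rw [hexp]
    have : a / 2 * Real.exp (m * r ^ e') <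
        (a - B * Real.exp (-((m - m') * r ^ e'))) * Real.exp (m * r ^ e') :=
      mul_lt_mul_of_pos_right key1 hEpos
    calc cM * (a/2) * r ^ q * Real.exp (m * r ^ e')
        = cM * r ^ q * (a / 2 * Real.exp (m * r ^ e')) := by ring
      _ < cM * r ^ q * ((a - B * Real.exp (-((m - m') * r ^ e'))) * Real.exp (m * r ^ e')) := by
          apply mul_lt_mul_of_pos_left this; positivity
      _ = cM * r ^ q * (a * Real.exp (m * r ^ e') -
            B * Real.exp (-((m - m') * r ^ e')) * Real.exp (m * r ^ e')) := by ring
  linarith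

lemma aux_sector (d : ℕ) (hd : 1 ≤ d) {θ : ℝ} (hθ1 : -(π / (2 * ((d:ℝ) + 1))) < θ)
    (hθ2 : θ < 0) {r : ℝ} (hr : 0 < r) :
    ((r:ℂ) * Complex.exp (θ * I)) ≠ 0 ∧ ((r:ℂ) * Complex.exp (θ * I)).arg = θ ∧
      ‖(r:ℂ) * Complex.exp (θ * I)‖ = r := by
  have hπ := Real.pi_pos
  have hd0 : (0:ℝ) < d := by exact_mod_cast hd
  have hbig : -π < θ := by
    have h1 : π / (2 * ((d:ℝ) + 1)) ≤ π / 2 :=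
      div_le_div_of_nonneg_left hπ.le (by norm_num) (by linarith)
    linarith
  refine ⟨?_, ?_, ?_⟩
  · apply mul_ne_zero
    · exact_mod_cast ne_of_gt hr
    · exact Complex.exp_ne_zero _
  · rw [Complex.exp_mul_I]
    exact Complex.arg_mul_cos_add_sin_mul_I hr ⟨hbig, by linarith⟩
  · rw [norm_mul, Complex.norm_exp]
    simp [abs_of_pos hr]

lemma aux_cpow (d : ℕ) (hd : 1 ≤ d) {θ : ℝ} {r : ℝ} (hr : 0 < r)
    (hz : ((r:ℂ) * Complex.exp (θ * I)) ≠ 0)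
    (harg : ((r:ℂ) * Complex.exp (θ * I)).arg = θ)
    (habs : ‖(r:ℂ) * Complex.exp (θ * I)‖ = r) (k : ℕ) :
    ((r:ℂ) * Complex.exp (θ * I)) ^ (((d:ℂ) + 1) / d) * (Complex.exp (2 * π * I / d)) ^ k =
      Complex.exp (((((d:ℝ)+1)/d * Real.log r : ℝ) : ℂ) +
        ((((d:ℝ)+1)/d * θ + 2*π*k/d : ℝ) : ℂ) * I) := by
  have hd0 : (0:ℝ) < d := by exact_mod_cast hd
  have hdC : (d:ℂ) ≠ 0 := by exact_mod_cast ne_of_gt hd0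
  have hlog : Complex.log ((r:ℂ) * Complex.exp (θ * I)) = (Real.log r : ℂ) + θ * I := by
    apply Complex.ext
    · rw [Complex.log_re, habs]; simp
    · rw [Complex.log_im, harg]; simp
  rw [Complex.cpow_def_of_ne_zero hz, ← Complex.exp_nat_mul, ← Complex.exp_add, hlog]
  congr 1
  push_cast
  field_simp
  ring

lemma aux_re (x y : ℝ) :
    (Complex.exp ((x:ℝ) + ((y:ℝ):ℂ) * I)).re = Real.exp x * Real.cos y := by
  rw [Complex.exp_re]
  simp

set_option maxHeartbeats 1000000 in
/-- among the functions
`G_k(z) = K √(2π/d) z^{(2A+1-d)/(2d)} ω^{k(A-1/2)} exp[(d/(d+1)) z^{(d+1)/d} ω^k]`,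
those `k` (collected in `D`) for which `Re(z^{(d+1)/d} ω^k) > 0` in the sector
`arg z ∈ (-π/(2(d+1)), 0)` form a linearly independent family on the sector, and no
nontrivial linear combination of them is of exponential type there (i.e. bounded by
`|z|^{c₁} e^{c₂|z|}`). -/
theorem stmt_19 (d : ℕ) (hd : 1 ≤ d) (A K : ℂ) (hK : K ≠ 0) :
    letI ω : ℂ := Complex.exp (2 * π * I / d)
    letI Sec : Set ℂ :=
      {z : ℂ | z ≠ 0 ∧ -(π / (2 * (d + 1))) < Complex.arg z ∧ Complex.arg z < 0}
    letI G : ℕ → ℂ → ℂ := fun k z =>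
      K * (Real.sqrt (2 * π / d) : ℂ) * z ^ ((2 * A + 1 - d) / (2 * d)) *
        ω ^ ((k : ℂ) * (A - 1 / 2)) *
        Complex.exp ((d : ℂ) / (d + 1) * z ^ (((d : ℂ) + 1) / d) * ω ^ k)
    ∀ D : Finset ℕ,
      (∀ k : ℕ, k ∈ D ↔ k < d ∧ ∀ z ∈ Sec, 0 < (z ^ (((d : ℂ) + 1) / d) * ω ^ k).re) →
      (∀ C : ℕ → ℂ, (∀ z ∈ Sec, ∑ k ∈ D, C k * G k z = 0) → ∀ k ∈ D, C k = 0) ∧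
      (∀ C : ℕ → ℂ, (∃ k ∈ D, C k ≠ 0) →
        ¬ ∃ c1 c2 : ℝ, ∀ z ∈ Sec, 1 ≤ ‖z‖ →
          ‖∑ k ∈ D, C k * G k z‖ ≤
            ‖z‖ ^ c1 * Real.exp (c2 * ‖z‖)) := by
  intro D hD
  classical
  have hπ := Real.pi_pos
  have hd0 : (0:ℝ) < d := by exact_mod_cast hd
  have hdC : (d:ℂ) ≠ 0 := by exact_mod_cast ne_of_gt hd0
  obtain ⟨θ, hθ1, hθ2, hinj⟩ := aux_theta d hd
  set e' : ℝ := ((d:ℝ)+1)/d with he'def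
  have he' : 1 < e' := by rw [he'def, lt_div_iff₀ hd0]; linarith
  set β : ℕ → ℝ := fun k => ((d:ℝ)+1)/d * θ + 2*π*(k:ℝ)/d with hβdef
  set νr : ℝ := (d:ℝ)/((d:ℝ)+1) with hνdef
  have hνpos : 0 < νr := div_pos hd0 (by linarith)
  set z : ℝ → ℂ := fun r => (r:ℂ) * Complex.exp (θ * I) with hzdef
  have hzfacts : ∀ r : ℝ, 0 < r → z r ≠ 0 ∧ (z r).arg = θ ∧ ‖z r‖ = r :=
    fun r hr => aux_sector d hd hθ1 hθ2 hr
  have hSec : ∀ r : ℝ, 0 < r →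
      z r ∈ {z' : ℂ | z' ≠ 0 ∧ -(π / (2 * ((d:ℝ) + 1))) < z'.arg ∧ z'.arg < 0} := by
    intro r hr
    obtain ⟨h1, h2, h3⟩ := hzfacts r hr
    exact ⟨h1, by rw [h2]; exact hθ1, by rw [h2]; exact hθ2⟩
  have hpow : ∀ r : ℝ, 0 < r → ∀ k : ℕ,
      (z r) ^ (((d:ℂ)+1)/d) * Complex.exp (2 * π * I / d) ^ k =
        Complex.exp (((e' * Real.log r : ℝ):ℂ) + ((β k : ℝ):ℂ) * I) := by
    intro r hr k
    obtain ⟨h1, h2, h3⟩ := hzfacts r hr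
    exact aux_cpow d hd hr h1 h2 h3 k
  have hre : ∀ r : ℝ, 0 < r → ∀ k : ℕ,
      ((z r) ^ (((d:ℂ)+1)/d) * Complex.exp (2 * π * I / d) ^ k).re = r ^ e' * Real.cos (β k) := by
    intro r hr k
    rw [hpow r hr k, aux_re]
    rw [Real.rpow_def_of_pos hr, mul_comm (Real.log r) e']
  have hcospos : ∀ k ∈ D, 0 < Real.cos (β k) := by
    intro k hk
    have h := ((hD k).1 hk).2 (z 1) (hSec 1 one_pos)
    rw [hre 1 one_pos k, Real.one_rpow, one_mul] at h
    exact h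
  have habsE : ∀ r : ℝ, 0 < r → ∀ k : ℕ,
      ‖Complex.exp ((d:ℂ)/(d+1) * (z r) ^ (((d:ℂ)+1)/d) * Complex.exp (2 * π * I / d) ^ k)‖ =
        Real.exp (νr * (r ^ e' * Real.cos (β k))) := by
    intro r hr k
    rw [Complex.norm_exp]
    congr 1
    rw [mul_assoc, show ((d:ℂ)/((d:ℂ)+1)) = ((νr:ℝ):ℂ) by rw [hνdef]; push_cast; ring,
      Complex.re_ofReal_mul, hre r hr k]
  -- PART 2
  have part2 : ∀ C : ℕ → ℂ, (∃ k ∈ D, C k ≠ 0) →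
      ¬ ∃ c1 c2 : ℝ, ∀ z' ∈ {z' : ℂ | z' ≠ 0 ∧ -(π / (2 * ((d:ℝ) + 1))) < z'.arg ∧ z'.arg < 0},
          1 ≤ ‖z'‖ →
        ‖∑ k ∈ D, C k *
          (K * (Real.sqrt (2 * π / d) : ℂ) * z' ^ ((2 * A + 1 - (d:ℂ)) / (2 * (d:ℂ))) *
            Complex.exp (2 * π * I / d) ^ ((k:ℂ) * (A - 1/2)) *
            Complex.exp ((d:ℂ) / ((d:ℂ) + 1) * z' ^ (((d:ℂ) + 1) / d) *
              Complex.exp (2 * π * I / d) ^ k))‖ ≤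
          ‖z'‖ ^ c1 * Real.exp (c2 * ‖z'‖) := by
    rintro C ⟨k₀, hk₀D, hk₀⟩ ⟨c1, c2, hbound⟩
    set b : ℕ → ℂ := fun k => C k * Complex.exp (2 * π * I / d) ^ ((k:ℂ) * (A - 1/2)) with hbdef
    set S : Finset ℕ := D.filter (fun k => C k ≠ 0) with hSdef
    have hS : S.Nonempty := ⟨k₀, Finset.mem_filter.2 ⟨hk₀D, hk₀⟩⟩
    obtain ⟨ks, hksS, hmax⟩ := S.exists_max_image (fun k => Real.cos (β k)) hS
    have hksD : ks ∈ D := (Finset.mem_filter.1 hksS).1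
    have hksC : C ks ≠ 0 := (Finset.mem_filter.1 hksS).2
    have hkslt : ks < d := ((hD ks).1 hksD).1
    have hμ : 0 < Real.cos (β ks) := hcospos ks hksD
    obtain ⟨δ, hδ, hgap⟩ : ∃ δ, 0 < δ ∧ ∀ k ∈ D.erase ks, C k ≠ 0 →
        Real.cos (β k) ≤ Real.cos (β ks) - δ := by
      set T : Finset ℕ := (D.erase ks).filter (fun k => C k ≠ 0) with hTdef
      rcases T.eq_empty_or_nonempty with hT | hT
      · refine ⟨1, one_pos, fun k hk hCk => ?_⟩
        exfalso
        have hmem : k ∈ T := Finset.mem_filter.2 ⟨hk, hCk⟩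
        rw [hT] at hmem
        exact Finset.notMem_empty k hmem
      · refine ⟨Real.cos (β ks) - T.sup' hT (fun k => Real.cos (β k)), ?_, ?_⟩
        · obtain ⟨k₁, hk₁T, hk₁e⟩ := Finset.exists_mem_eq_sup' hT (fun k => Real.cos (β k))
          have hk₁E := Finset.mem_filter.1 hk₁T
          have hk₁D : k₁ ∈ D := Finset.mem_of_mem_erase hk₁E.1
          have hk₁ne : k₁ ≠ ks := Finset.ne_of_mem_erase hk₁E.1
          have hle : Real.cos (β k₁) ≤ Real.cos (β ks) :=
            hmax k₁ (Finset.mem_filter.2 ⟨hk₁D, hk₁E.2⟩)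
          have hne : Real.cos (β k₁) ≠ Real.cos (β ks) :=
            hinj k₁ ks ((hD k₁).1 hk₁D).1 hkslt hk₁ne
          rw [hk₁e]
          rcases lt_or_eq_of_le hle with h | h
          · linarith
          · exact absurd h hne
        · intro k hk hCk
          have h := Finset.le_sup' (fun k => Real.cos (β k))
            (Finset.mem_filter.2 ⟨hk, hCk⟩ : k ∈ T)
          linarith
    have hbks : 0 < ‖b ks‖ := by
      rw [hbdef]
      simp only
      rw [norm_mul]
      apply mul_pos (norm_pos_iff.mpr hksC)
      apply norm_pos_iff.mpr
      rw [Ne, Complex.cpow_eq_zero_iff]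
      rintro ⟨h1, -⟩
      exact Complex.exp_ne_zero _ h1
    have hsq : 0 < Real.sqrt (2*π/d) := Real.sqrt_pos.2 (by positivity)
    have hcM : 0 < ‖K‖ * Real.sqrt (2*π/d) /
        Real.exp (θ * ((2 * A + 1 - (d:ℂ)) / (2 * (d:ℂ))).im) :=
      div_pos (mul_pos (norm_pos_iff.mpr hK) hsq) (Real.exp_pos _)
    have hB : (0:ℝ) ≤ ∑ k ∈ D.erase ks, ‖b k‖ :=
      Finset.sum_nonneg (fun k _ => norm_nonneg _)
    obtain ⟨r, hr1, hlt⟩ := aux_growth e' (νr * Real.cos (β ks)) (νr * (Real.cos (β ks) - δ))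
      (‖K‖ * Real.sqrt (2*π/d) /
        Real.exp (θ * ((2 * A + 1 - (d:ℂ)) / (2 * (d:ℂ))).im))
      (‖b ks‖) (∑ k ∈ D.erase ks, ‖b k‖) c1 c2
      (((2 * A + 1 - (d:ℂ)) / (2 * (d:ℂ))).re)
      he' (mul_pos hνpos hμ)
      (by nlinarith) hcM hbks hB
    have hr0 : (0:ℝ) < r := lt_of_lt_of_le one_pos hr1
    obtain ⟨hz0, hzarg, hzabs⟩ := hzfacts r hr0
    set E : ℕ → ℂ := fun k =>
      Complex.exp ((d:ℂ)/((d:ℂ)+1) * (z r) ^ (((d:ℂ)+1)/(d:ℂ)) * Complex.exp (2 * π * I / d) ^ k) with hEdef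
    have habsEk : ∀ k, ‖E k‖ =
        Real.exp (νr * (r ^ e' * Real.cos (β k))) := fun k => habsE r hr0 k
    have hfact : (∑ k ∈ D, C k *
          (K * (Real.sqrt (2 * π / d) : ℂ) * (z r) ^ ((2 * A + 1 - (d:ℂ)) / (2 * (d:ℂ))) *
            Complex.exp (2 * π * I / d) ^ ((k:ℂ) * (A - 1/2)) *
            Complex.exp ((d:ℂ) / ((d:ℂ) + 1) * (z r) ^ (((d:ℂ) + 1) / d) *
              Complex.exp (2 * π * I / d) ^ k))) =
        (K * ((Real.sqrt (2*π/(d:ℝ)) : ℝ):ℂ) * (z r) ^ ((2 * A + 1 - (d:ℂ)) / (2 * (d:ℂ)))) *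
          (∑ k ∈ D, b k * E k) := by
      rw [Finset.mul_sum]
      apply Finset.sum_congr rfl
      intro k _
      simp only [hbdef, hEdef]
      ring
    have habs_fact : ‖∑ k ∈ D, C k *
          (K * (Real.sqrt (2 * π / d) : ℂ) * (z r) ^ ((2 * A + 1 - (d:ℂ)) / (2 * (d:ℂ))) *
            Complex.exp (2 * π * I / d) ^ ((k:ℂ) * (A - 1/2)) *
            Complex.exp ((d:ℂ) / ((d:ℂ) + 1) * (z r) ^ (((d:ℂ) + 1) / d) *
              Complex.exp (2 * π * I / d) ^ k))‖ =
        (‖K‖ * Real.sqrt (2*π/d) /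
          Real.exp (θ * ((2 * A + 1 - (d:ℂ)) / (2 * (d:ℂ))).im)) *
          r ^ (((2 * A + 1 - (d:ℂ)) / (2 * (d:ℂ))).re) *
          ‖∑ k ∈ D, b k * E k‖ := by
      rw [hfact, norm_mul, norm_mul, norm_mul, Complex.norm_cpow_of_ne_zero hz0, hzarg, hzabs,
        Complex.norm_real, Real.norm_eq_abs, _root_.abs_of_nonneg (Real.sqrt_nonneg _)]
      ring
    have hsplit : (∑ k ∈ D, b k * E k) = b ks * E ks + ∑ k ∈ D.erase ks, b k * E k :=
      (Finset.add_sum_erase D _ hksD).symm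
    have htail : ‖∑ k ∈ D.erase ks, b k * E k‖ ≤
        (∑ k ∈ D.erase ks, ‖b k‖) *
          Real.exp (νr * (Real.cos (β ks) - δ) * r ^ e') := by
      calc ‖∑ k ∈ D.erase ks, b k * E k‖
          ≤ ∑ k ∈ D.erase ks, ‖b k * E k‖ := norm_sum_le _ _
        _ ≤ ∑ k ∈ D.erase ks, ‖b k‖ *
              Real.exp (νr * (Real.cos (β ks) - δ) * r ^ e') := by
            apply Finset.sum_le_sum
            intro k hk
            rw [norm_mul, habsEk k]
            by_cases hCk : C k = 0
            · have hb0 : b k = 0 := by rw [hbdef]; simp [hCk]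
              rw [hb0]
              simp
            · apply mul_le_mul_of_nonneg_left _ (norm_nonneg _)
              rw [Real.exp_le_exp]
              have h1 := hgap k hk hCk
              have h2 : (0:ℝ) ≤ νr * r ^ e' := by positivity
              have h3 := mul_le_mul_of_nonneg_left h1 h2
              ring_nf
              ring_nf at h3
              linarith
        _ = (∑ k ∈ D.erase ks, ‖b k‖) *
              Real.exp (νr * (Real.cos (β ks) - δ) * r ^ e') := by
            rw [← Finset.sum_mul]
    have hhead : ‖b ks * E ks‖ =
        ‖b ks‖ * Real.exp (νr * Real.cos (β ks) * r ^ e') := by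
      rw [norm_mul, habsEk ks]
      ring_nf
    have htri : ‖b ks‖ * Real.exp (νr * Real.cos (β ks) * r ^ e') -
        (∑ k ∈ D.erase ks, ‖b k‖) *
          Real.exp (νr * (Real.cos (β ks) - δ) * r ^ e') ≤
        ‖∑ k ∈ D, b k * E k‖ := by
      have h := norm_add_le (∑ k ∈ D, b k * E k) (- ∑ k ∈ D.erase ks, b k * E k)
      have hXY : (∑ k ∈ D, b k * E k) + (- ∑ k ∈ D.erase ks, b k * E k) = b ks * E ks := by
        rw [hsplit]; ring
      rw [hXY, norm_neg, hhead] at h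
      linarith
    have hup := hbound (z r) (hSec r hr0) (by rw [hzabs]; exact hr1)
    rw [hzabs, habs_fact] at hup
    have hrq : (0:ℝ) < r ^ (((2 * A + 1 - (d:ℂ)) / (2 * (d:ℂ))).re) :=
      Real.rpow_pos_of_pos hr0 _
    have hmul := mul_le_mul_of_nonneg_left htri (le_of_lt (mul_pos hcM hrq))
    nlinarith [hlt, hmul, hup]
  refine ⟨?_, part2⟩
  intro C hC k hk
  by_contra hCk
  refine part2 C ⟨k, hk, hCk⟩ ⟨0, 0, fun z' hz' _ => ?_⟩
  have hC' : (∑ k ∈ D, C k *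
      (K * (Real.sqrt (2 * π / d) : ℂ) * z' ^ ((2 * A + 1 - (d:ℂ)) / (2 * (d:ℂ))) *
        Complex.exp (2 * π * I / d) ^ ((k:ℂ) * (A - 1/2)) *
        Complex.exp ((d:ℂ) / ((d:ℂ) + 1) * z' ^ (((d:ℂ) + 1) / d) *
          Complex.exp (2 * π * I / d) ^ k))) = 0 := hC z' hz'
  rw [hC']
  simp only [norm_zero]
  positivity
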